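/- Let J ⊆ ℝ be an interval and let L be an operator mapping nonnegative bounded continuous functions on J to nonnegative functions on J which is monotone (g ≤ h pointwise implies L(g) ≤ L(h) pointwise), sublinear (L(g+h)(y) ≤ L(g)(y) + L(h)(y) for all y), positively homogeneous (L(c·g) = c·L(g) for all c ≥ 0), and satisfies L(e₀) = e₀ where e₀ is the constant function 1. Then for every nonnegative bounded continuous g on J, every δ > 0 and every y ∈ J, |g(y) − L(g)(y)| ≤ (1 + (1/δ)·L(φ_y)(y)) · ω(g, δ), where φ_y(t) = |t − y|. -/

import Mathlib

/-- `g` is a nonnegative bounded continuous function on `J`. -/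
def NonnegBddCont (J : Set ℝ) (g : ℝ → ℝ) : Prop :=
  ContinuousOn g J ∧ (∀ x ∈ J, 0 ≤ g x) ∧ ∃ C : ℝ, ∀ x ∈ J, g x ≤ C

/-- The modulus of continuity of `g` on `J`. -/
noncomputable def omegaMod (J : Set ℝ) (g : ℝ → ℝ) (δ : ℝ) : ℝ :=
  sSup {d : ℝ | ∃ x q : ℝ, x ∈ J ∧ q ∈ J ∧ |x - q| ≤ δ ∧ d = |g x - g q|}

theorem shisha_mond_estimate (J : Set ℝ) (hJ : J.OrdConnected)
    (L : (ℝ → ℝ) → (ℝ → ℝ))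
    (hnonneg : ∀ g, NonnegBddCont J g → ∀ y ∈ J, 0 ≤ L g y)
    (hmono : ∀ g h, NonnegBddCont J g → NonnegBddCont J h →
      (∀ x ∈ J, g x ≤ h x) → ∀ y ∈ J, L g y ≤ L h y)
    (hsub : ∀ g h, NonnegBddCont J g → NonnegBddCont J h →
      ∀ y ∈ J, L (g + h) y ≤ L g y + L h y)
    (hhom : ∀ c : ℝ, 0 ≤ c → ∀ g, NonnegBddCont J g →
      ∀ y ∈ J, L (fun t => c * g t) y = c * L g y)
    (hone : ∀ y ∈ J, L (fun _ => (1 : ℝ)) y = 1)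
    (hphi : ∀ y ∈ J, NonnegBddCont J (fun t => |t - y|))
    (g : ℝ → ℝ) (hg : NonnegBddCont J g)
    (δ : ℝ) (hδ : 0 < δ) (y : ℝ) (hy : y ∈ J) :
    |g y - L g y| ≤
      (1 + (1 / δ) * L (fun t => |t - y|) y) * omegaMod J g δ := by
  classical
  obtain ⟨hgc, hgnn, C, hgC⟩ := hg
  have hg' : NonnegBddCont J g := ⟨hgc, hgnn, C, hgC⟩
  set ω := omegaMod J g δ with hωdef
  set S := {d : ℝ | ∃ x q : ℝ, x ∈ J ∧ q ∈ J ∧ |x - q| ≤ δ ∧ d = |g x - g q|} with hSdef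
  have hSne : (0 : ℝ) ∈ S := ⟨y, y, hy, hy, by simp [le_of_lt hδ], by simp⟩
  have hSbdd : BddAbove S := by
    refine ⟨C, ?_⟩
    rintro d ⟨x, q, hx, hq, -, rfl⟩
    have h1 := hgnn x hx; have h2 := hgnn q hq
    have h3 := hgC x hx; have h4 := hgC q hq
    rw [abs_sub_le_iff]
    constructor <;> linarith
  have hω0 : 0 ≤ ω := le_csSup hSbdd hSne
  have hωmem : ∀ x ∈ J, ∀ q ∈ J, |x - q| ≤ δ → |g x - g q| ≤ ω := fun x hx q hq h =>
    le_csSup hSbdd ⟨x, q, hx, hq, h, rfl⟩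
  -- key estimate, ordered version
  have keyA : ∀ x ∈ J, ∀ q ∈ J, q ≤ x → |g x - g q| ≤ (1 + (x - q) / δ) * ω := by
    intro x hx q hq hqx
    rcases eq_or_lt_of_le hqx with heq | hlt
    · rw [← heq]
      simpa using hω0
    · set n := ⌈(x - q) / δ⌉₊ with hn
      have hxq : 0 < x - q := sub_pos.mpr hlt
      have hn0 : 0 < n := Nat.ceil_pos.mpr (div_pos hxq hδ)
      have hnR : (0 : ℝ) < n := Nat.cast_pos.mpr hn0
      set s : ℝ := (x - q) / n with hs
      have hs0 : 0 < s := div_pos hxq hnR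
      have hsδ : s ≤ δ := by
        rw [hs, div_le_iff₀ hnR]
        have h1 := Nat.le_ceil ((x - q) / δ)
        rw [div_le_iff₀ hδ] at h1
        rw [← hn] at h1
        linarith
      set p : ℕ → ℝ := fun i => q + i * s with hp
      have hpn : p n = x := by
        simp only [hp, hs]
        field_simp
        ring
      have hpJ : ∀ i ≤ n, p i ∈ J := by
        intro i hi
        apply hJ.out hq hx
        constructor
        · simp only [hp]
          nlinarith [mul_nonneg (Nat.cast_nonneg (α := ℝ) i) hs0.le]
        · have h2 : (i : ℝ) * s ≤ (n : ℝ) * s := by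
            apply mul_le_mul_of_nonneg_right _ hs0.le
            exact_mod_cast hi
          have h3 : (n : ℝ) * s = x - q := by
            rw [hs]; field_simp
          simp only [hp]
          linarith
      have hp0 : p 0 = q := by simp [hp]
      have htel : g x - g q = ∑ i ∈ Finset.range n, (g (p (i + 1)) - g (p i)) := by
        rw [Finset.sum_range_sub (fun i => g (p i))]
        simp only [hpn, hp0]
      have hterm : ∀ i ∈ Finset.range n, |g (p (i + 1)) - g (p i)| ≤ ω := by
        intro i hi
        rw [Finset.mem_range] at hi
        apply hωmem _ (hpJ (i + 1) hi) _ (hpJ i hi.le)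
        have hd : p (i + 1) - p i = s := by
          simp only [hp]
          push_cast
          ring
        rw [hd, abs_of_pos hs0]
        exact hsδ
      have hnle : (n : ℝ) ≤ 1 + (x - q) / δ := by
        have := Nat.ceil_lt_add_one (by positivity : (0 : ℝ) ≤ (x - q) / δ)
        rw [← hn] at this
        linarith
      calc |g x - g q| = |∑ i ∈ Finset.range n, (g (p (i + 1)) - g (p i))| := by rw [htel]
        _ ≤ ∑ i ∈ Finset.range n, |g (p (i + 1)) - g (p i)| :=
            Finset.abs_sum_le_sum_abs _ _
        _ ≤ ∑ _i ∈ Finset.range n, ω := Finset.sum_le_sum hterm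
        _ = (n : ℝ) * ω := by simp [Finset.sum_const, nsmul_eq_mul]
        _ ≤ (1 + (x - q) / δ) * ω := mul_le_mul_of_nonneg_right hnle hω0
  have keyAbs : ∀ x ∈ J, |g x - g y| ≤ ω + (ω / δ) * |x - y| := by
    intro x hx
    rcases le_total y x with h | h
    · have h1 := keyA x hx y hy h
      have h2 : |x - y| = x - y := abs_of_nonneg (by linarith)
      have h3 : (1 + (x - y) / δ) * ω = ω + (ω / δ) * (x - y) := by ring
      rw [h2]; linarith
    · have h1 := keyA y hy x hx h
      have h2 : |x - y| = y - x := by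
        rw [abs_sub_comm]; exact abs_of_nonneg (by linarith)
      have h3 : (1 + (y - x) / δ) * ω = ω + (ω / δ) * (y - x) := by ring
      rw [abs_sub_comm, h2]; linarith
  -- NonnegBddCont facts
  have hconst : ∀ c : ℝ, 0 ≤ c → NonnegBddCont J (fun _ => c) := fun c hc =>
    ⟨continuousOn_const, fun _ _ => hc, c, fun _ _ => le_rfl⟩
  have hadd : ∀ f h : ℝ → ℝ, NonnegBddCont J f → NonnegBddCont J h →
      NonnegBddCont J (f + h) := by
    rintro f h ⟨fc, fnn, Cf, hCf⟩ ⟨hc, hnn, Ch, hCh⟩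
    exact ⟨fc.add hc, fun x hx => add_nonneg (fnn x hx) (hnn x hx), Cf + Ch,
      fun x hx => add_le_add (hCf x hx) (hCh x hx)⟩
  set φf : ℝ → ℝ := fun t => |t - y| with hφdef
  have hφ : NonnegBddCont J φf := hphi y hy
  have hωδ : 0 ≤ ω / δ := div_nonneg hω0 hδ.le
  set f1 : ℝ → ℝ := fun _ => g y with hf1def
  set f2 : ℝ → ℝ := fun _ => ω with hf2def
  set f3 : ℝ → ℝ := fun t => (ω / δ) * φf t with hf3def
  have hf3 : NonnegBddCont J f3 := by
    obtain ⟨fc, fnn, Cf, hCf⟩ := hφ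
    exact ⟨fc.const_smul (ω / δ), fun x hx => mul_nonneg hωδ (fnn x hx), (ω / δ) * Cf,
      fun x hx => mul_le_mul_of_nonneg_left (hCf x hx) hωδ⟩
  have hφ' : NonnegBddCont J φf := hphi y hy
  have hgy0 : 0 ≤ g y := hgnn y hy
  have hf1 : NonnegBddCont J f1 := hconst _ hgy0
  have hf2 : NonnegBddCont J f2 := hconst _ hω0
  have hf23 : NonnegBddCont J (f2 + f3) := hadd _ _ hf2 hf3
  -- L of constants
  have Lconst : ∀ c : ℝ, 0 ≤ c → L (fun _ => c) y = c := by
    intro c hc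
    have h1 := hhom c hc (fun _ => 1) (hconst 1 zero_le_one) y hy
    simp only [mul_one] at h1
    rw [h1, hone y hy, mul_one]
  have Lf3 : L f3 y = (ω / δ) * L φf y := hhom _ hωδ _ hφ' y hy
  have hLφ : 0 ≤ L φf y := hnonneg _ hφ' y hy
  -- upper bound
  have hub : L g y ≤ g y + ω + (ω / δ) * L φf y := by
    have m1 : ∀ x ∈ J, g x ≤ (f1 + (f2 + f3)) x := by
      intro x hx
      have h1 := keyAbs x hx
      have h2 : g x - g y ≤ |g x - g y| := le_abs_self _
      simp only [Pi.add_apply, hf1def, hf2def, hf3def, hφdef]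
      linarith
    calc L g y ≤ L (f1 + (f2 + f3)) y := hmono _ _ hg' (hadd _ _ hf1 hf23) m1 y hy
      _ ≤ L f1 y + L (f2 + f3) y := hsub _ _ hf1 hf23 y hy
      _ ≤ L f1 y + (L f2 y + L f3 y) := add_le_add_right (hsub _ _ hf2 hf3 y hy) _
      _ = g y + ω + (ω / δ) * L φf y := by
          rw [Lconst _ hgy0, Lconst _ hω0] at *
          rw [Lf3]; ring
  -- lower bound
  have hlb : g y ≤ L g y + ω + (ω / δ) * L φf y := by
    have m2 : ∀ x ∈ J, f1 x ≤ (g + (f2 + f3)) x := by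
      intro x hx
      have h1 := keyAbs x hx
      have h2 : g y - g x ≤ |g x - g y| := by
        rw [abs_sub_comm]; exact le_abs_self _
      simp only [Pi.add_apply, hf1def, hf2def, hf3def, hφdef]
      linarith
    calc g y = L f1 y := (Lconst _ hgy0).symm
      _ ≤ L (g + (f2 + f3)) y := hmono _ _ hf1 (hadd _ _ hg' hf23) m2 y hy
      _ ≤ L g y + L (f2 + f3) y := hsub _ _ hg' hf23 y hy
      _ ≤ L g y + (L f2 y + L f3 y) := add_le_add_right (hsub _ _ hf2 hf3 y hy) _
      _ = L g y + ω + (ω / δ) * L φf y := by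
          rw [Lconst _ hω0] at *
          rw [Lf3]; ring
  have hR : (1 + (1 / δ) * L φf y) * ω = ω + (ω / δ) * L φf y := by ring
  rw [hR, abs_sub_le_iff]
  exact ⟨by linarith, by linarith⟩
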